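/- Let G be a topological group, let Q ⊆ G be a compact subset such that the subgroup generated by Q is all of G, and let U be an open subgroup of G. Then there exist finitely many elements q₁, …, q_k ∈ Q such that G is generated (as a group) by the set {q₁, …, q_k} ∪ U. -/

import Mathlib

open Pointwise


/-- Let `G` be a topological group, `Q ⊆ G` a compact subset generating `G`
as a group, and `U` an open subgroup of `G`. Then there exist finitely many elements
`q₁, …, q_k ∈ Q` such that `G` is generated by `{q₁, …, q_k} ∪ U`. -/
theorem statement8 (G : Type*) [Group G] [TopologicalSpace G] [IsTopologicalGroup G]
    (Q : Set G) (hQ : IsCompact Q) (hgen : Subgroup.closure Q = ⊤)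
    (U : Subgroup G) (hU : IsOpen (U : Set G)) :
    ∃ s : Finset G, (s : Set G) ⊆ Q ∧
      Subgroup.closure ((s : Set G) ∪ (U : Set G)) = ⊤ := by
  classical
  obtain ⟨t, ht⟩ := hQ.elim_finite_subcover (fun q : Q => ((q : G) • (U : Set G) : Set G))
    (fun q => hU.smul _)
    (fun x hx => Set.mem_iUnion.2 ⟨⟨x, hx⟩, ⟨1, U.one_mem, mul_one x⟩⟩)
  refine ⟨t.image (Subtype.val), ?_, ?_⟩
  · intro x hx
    simp only [Finset.coe_image, Set.mem_image] at hx
    obtain ⟨q, _, rfl⟩ := hx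
    exact q.2
  · rw [eq_top_iff, ← hgen, Subgroup.closure_le]
    intro x hx
    obtain ⟨q, hq, u, hu, rfl⟩ := Set.mem_iUnion₂.1 (ht hx)
    exact Subgroup.mul_mem _
      (Subgroup.subset_closure (Set.mem_union_left _
        (by simp only [Finset.coe_image, Set.mem_image]; exact ⟨q, hq, rfl⟩)))
      (Subgroup.subset_closure (Set.mem_union_right _ hu))
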